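/- Let N, m, K be positive integers, P an N×N real matrix, and X an N×m real matrix. Let t^0, …, t^K ∈ ℝ^N satisfy t^l_i ≥ 0 for all l, i and Σ_{l=0}^{K} t^l_i = 1 for every node i, and let γ_0, γ_1, …, γ_K be real scalars with γ_0 = 1. Then there exist node-wise coefficient vectors α^1, …, α^K with α^l_i ∈ [0,1] for all l, i such that, defining H^l = γ_l (P^l X), S^0 = X, and S^l = (1 − α^l) * S^{l-1} + α^l * H^l for 1 ≤ l ≤ K, one has S^K = Σ_{l=0}^{K} (γ_l t^l) * (P^l X). -/

import Mathlib

/-- For `a ∈ ℝ^N` and an `N × d` matrix `M`, `rowScale a M` is the matrix whose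
`i`-th row is `a i` times the `i`-th row of `M`. -/
def rowScale {N d : ℕ} (a : Fin N → ℝ) (M : Matrix (Fin N) (Fin d) ℝ) :
    Matrix (Fin N) (Fin d) ℝ :=
  Matrix.of fun i j => a i * M i j

/-- Expressive power of the weaker `K`-layer CAGNN with cumulative layer
weights fixed to scalars `γ_l` (`γ_0 = 1`): for any per-node probability
weights `t^0, …, t^K` over the layers, there exist importance scores
`α^1, …, α^K` with entries in `[0,1]` such that, with `H^l = γ_l (P^l X)`,
`S^0 = X`, and `S^l = (1 − α^l) * S^{l-1} + α^l * H^l`, one has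
`S^K = Σ_{l=0}^{K} (γ_l t^l) * (P^l X)`. -/
theorem cagnn_expresses_arbitrary_node_coefficients
    (N m K : ℕ) (hN : 0 < N) (hm : 0 < m) (hK : 0 < K)
    (P : Matrix (Fin N) (Fin N) ℝ) (X : Matrix (Fin N) (Fin m) ℝ)
    (t : ℕ → Fin N → ℝ)
    (ht : ∀ l, l ≤ K → ∀ i, 0 ≤ t l i)
    (hsum : ∀ i, ∑ l ∈ Finset.range (K + 1), t l i = 1)
    (γ : ℕ → ℝ) (hγ0 : γ 0 = 1) :
    ∃ α : ℕ → Fin N → ℝ,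
      (∀ l, 1 ≤ l → l ≤ K → ∀ i, α l i ∈ Set.Icc (0 : ℝ) 1) ∧
      ∀ H S : ℕ → Matrix (Fin N) (Fin m) ℝ,
        (∀ l, l ≤ K → H l = γ l • (P ^ l * X)) →
        S 0 = X →
        (∀ l, l < K →
          S (l + 1) = rowScale (fun i => 1 - α (l + 1) i) (S l)
                      + rowScale (α (l + 1)) (H (l + 1))) →
        S K = ∑ l ∈ Finset.range (K + 1),
          rowScale (fun i => γ l * t l i) (P ^ l * X) := by
  set T : ℕ → Fin N → ℝ := fun l i => ∑ j ∈ Finset.range (l+1), t j i with hT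
  refine ⟨fun l i => t l i / T l i, ?_, ?_⟩
  · intro l hl1 hlK i
    have hTnn : 0 ≤ T l i :=
      Finset.sum_nonneg fun j hj => ht j (by simp at hj; omega) i
    have htle : t l i ≤ T l i :=
      Finset.single_le_sum (fun j hj => ht j (by simp at hj; omega) i)
        (Finset.self_mem_range_succ l)
    constructor
    · exact div_nonneg (ht l hlK i) hTnn
    · rcases eq_or_lt_of_le hTnn with h|h
      · have h0 : t l i = 0 := le_antisymm (h ▸ htle) (ht l hlK i)
        simp [h0]
      · exact div_le_one_of_le₀ htle (le_of_lt h)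
  · intro H S hH hS0 hrec
    have key : ∀ l, l ≤ K → ∀ i j, T l i * S l i j =
        ∑ j' ∈ Finset.range (l+1), γ j' * t j' i * (P ^ j' * X) i j := by
      intro l
      induction l with
      | zero =>
        intro _ i j
        simp [hT, hS0, hγ0]
      | succ n ih =>
        intro hn i j
        have hn' : n ≤ K := Nat.le_of_succ_le hn
        have ihn := ih hn' i j
        have hSrec : S (n+1) i j =
            (1 - t (n+1) i / T (n+1) i) * S n i j
            + t (n+1) i / T (n+1) i * H (n+1) i j := by
          rw [hrec n (by omega)]; rfl
        have hHn : H (n+1) i j = γ (n+1) * (P ^ (n+1) * X) i j := by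
          rw [hH (n+1) hn]; rfl
        have hTsucc : T (n+1) i = T n i + t (n+1) i := Finset.sum_range_succ _ _
        rw [Finset.sum_range_succ, ← ihn]
        by_cases h0 : T (n+1) i = 0
        · have hall : ∀ j' ∈ Finset.range (n+2), t j' i = 0 := by
            have := (Finset.sum_eq_zero_iff_of_nonneg
              (fun j hj => ht j (by simp at hj; omega) i)).mp h0
            exact this
          have h1 : t (n+1) i = 0 := hall (n+1) (by simp)
          have h2 : T n i = 0 := by
            have := hTsucc; rw [h1, add_zero] at this; rw [← this, h0]
          rw [h0, hSrec, h1, h2]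
          ring
        · have ha : T (n+1) i * (t (n+1) i / T (n+1) i) = t (n+1) i :=
            mul_div_cancel₀ _ h0
          rw [hSrec, hHn]
          have : T (n+1) i * ((1 - t (n+1) i / T (n+1) i) * S n i j
              + t (n+1) i / T (n+1) i * (γ (n+1) * (P ^ (n+1) * X) i j))
              = (T (n+1) i - T (n+1) i * (t (n+1) i / T (n+1) i)) * S n i j
              + T (n+1) i * (t (n+1) i / T (n+1) i) * (γ (n+1) * (P ^ (n+1) * X) i j) := by
            ring
          rw [this, ha, hTsucc]
          ring
    have hTK : ∀ i, T K i = 1 := hsum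
    ext i j
    have := key K le_rfl i j
    rw [hTK i, one_mul] at this
    rw [this]
    rw [Matrix.sum_apply]
    exact Finset.sum_congr rfl fun l hl => rfl
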